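/- Let x ∈ ℝ^d and suppose there exist d linearly independent vectors Δ₁, …, Δ_d ∈ ℤ^d with |Δ_k| ≤ A₁ and |x·Δ_k| ≤ A₂ for all k = 1, …, d. Then |x| ≤ C(d)·A₁^{d−1}·A₂, for a constant C(d) depending only on d. -/

import Mathlib

-- bound on |det B| when column j has entries ≤ A₂ and other entries ≤ A₁
theorem det_bound_aux (d : ℕ) (B : Matrix (Fin d) (Fin d) ℝ) (j : Fin d)
    (A₁ A₂ : ℝ) (hA₁ : 0 ≤ A₁) (hA₂ : 0 ≤ A₂)
    (hcol : ∀ k, |B k j| ≤ A₂) (hrest : ∀ k i, i ≠ j → |B k i| ≤ A₁) :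
    |B.det| ≤ (Nat.factorial d : ℝ) * A₁ ^ (d - 1) * A₂ := by
  rw [Matrix.det_apply]
  have key : ∀ σ : Equiv.Perm (Fin d),
      |Equiv.Perm.sign σ • ∏ i, B (σ i) i| ≤ A₁ ^ (d - 1) * A₂ := by
    intro σ
    have habs : |Equiv.Perm.sign σ • ∏ i, B (σ i) i| = |∏ i, B (σ i) i| := by
      rcases Int.units_eq_one_or (Equiv.Perm.sign σ) with h | h <;>
        simp [h, Units.smul_def, abs_neg]
    rw [habs, Finset.abs_prod]
    rw [← Finset.prod_erase_mul _ _ (Finset.mem_univ j)]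
    have h1 : ∏ i ∈ Finset.univ.erase j, |B (σ i) i| ≤ A₁ ^ (d - 1) := by
      calc ∏ i ∈ Finset.univ.erase j, |B (σ i) i|
          ≤ ∏ _i ∈ Finset.univ.erase j, A₁ :=
            Finset.prod_le_prod (fun i _ => abs_nonneg _)
              (fun i hi => hrest _ _ (Finset.ne_of_mem_erase hi))
        _ = A₁ ^ (d - 1) := by
            rw [Finset.prod_const, Finset.card_erase_of_mem (Finset.mem_univ j)]
            simp
    exact mul_le_mul h1 (hcol _) (abs_nonneg _) (by positivity)
  calc |∑ σ : Equiv.Perm (Fin d), Equiv.Perm.sign σ • ∏ i, B (σ i) i|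
      ≤ ∑ σ : Equiv.Perm (Fin d), |Equiv.Perm.sign σ • ∏ i, B (σ i) i| :=
        Finset.abs_sum_le_sum_abs _ _
    _ ≤ ∑ _σ : Equiv.Perm (Fin d), A₁ ^ (d - 1) * A₂ :=
        Finset.sum_le_sum fun σ _ => key σ
    _ = (Nat.factorial d : ℝ) * A₁ ^ (d - 1) * A₂ := by
        rw [Finset.sum_const, Finset.card_univ, Fintype.card_perm, nsmul_eq_mul, mul_assoc, Fintype.card_fin]

theorem stmt6 (d : ℕ) (hd : 0 < d) :
    ∃ C : ℝ, 0 < C ∧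
      ∀ (x : Fin d → ℝ) (Δ : Fin d → Fin d → ℤ) (A₁ A₂ : ℝ),
        0 < A₁ → 0 < A₂ →
        LinearIndependent ℤ Δ →
        (∀ k, Real.sqrt (∑ i, ((Δ k i : ℝ)) ^ 2) ≤ A₁) →
        (∀ k, |∑ i, x i * (Δ k i : ℝ)| ≤ A₂) →
        Real.sqrt (∑ i, (x i) ^ 2) ≤ C * A₁ ^ (d - 1) * A₂ := by
  refine ⟨Real.sqrt d * Nat.factorial d, ?_, ?_⟩
  · apply mul_pos
    · exact Real.sqrt_pos.mpr (by exact_mod_cast hd)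
    · exact_mod_cast Nat.factorial_pos d
  intro x Δ A₁ A₂ hA₁ hA₂ hli hΔ hx
  -- entrywise bounds
  have hentry : ∀ k i, |(Δ k i : ℝ)| ≤ A₁ := by
    intro k i
    have h1 : ((Δ k i : ℝ)) ^ 2 ≤ ∑ j, ((Δ k j : ℝ)) ^ 2 :=
      Finset.single_le_sum (f := fun j => ((Δ k j : ℝ)) ^ 2)
        (fun j _ => sq_nonneg _) (Finset.mem_univ i)
    calc |(Δ k i : ℝ)| = Real.sqrt (((Δ k i : ℝ)) ^ 2) := (Real.sqrt_sq_eq_abs _).symm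
      _ ≤ Real.sqrt (∑ j, ((Δ k j : ℝ)) ^ 2) := Real.sqrt_le_sqrt h1
      _ ≤ A₁ := hΔ k
  -- integer matrix has nonzero determinant
  set Mz : Matrix (Fin d) (Fin d) ℤ := Matrix.of Δ with hMz
  have hdetz : Mz.det ≠ 0 := by
    have hfq : LinearIndependent ℚ (fun k => (fun i => (Δ k i : ℚ))) := by
      rw [← LinearIndependent.iff_fractionRing ℤ ℚ]
      let f : (Fin d → ℤ) →ₗ[ℤ] (Fin d → ℚ) :=
        { toFun := fun v i => (v i : ℚ)
          map_add' := by intro a b; funext i; simp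
          map_smul' := by intro a b; funext i; simp }
      have hinj : Function.Injective f := fun a b h =>
        funext fun i => Int.cast_injective (congrFun h i)
      exact hli.map' f (LinearMap.ker_eq_bot.mpr hinj)
    have hunit : IsUnit (Matrix.of (fun k i => (Δ k i : ℚ))) :=
      Matrix.linearIndependent_rows_iff_isUnit.mp hfq
    have hdq : (Matrix.of (fun k i => (Δ k i : ℚ))).det ≠ 0 :=
      (Matrix.isUnit_iff_isUnit_det _).mp hunit |>.ne_zero
    intro h
    apply hdq
    have h2 := (RingHom.map_det (Int.castRingHom ℚ) Mz).symm
    simp only [RingHom.mapMatrix_apply] at h2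
    have h3 : Matrix.of (fun k i => (Δ k i : ℚ)) = Mz.map (Int.castRingHom ℚ) := rfl
    rw [h3, h2, h]
    simp
  have hdet1 : (1 : ℝ) ≤ |((Mz.det : ℤ) : ℝ)| := by
    exact_mod_cast Int.one_le_abs hdetz
  -- real matrix and Cramer
  set M : Matrix (Fin d) (Fin d) ℝ := Matrix.of (fun k i => (Δ k i : ℝ)) with hM
  have hMdet : M.det = ((Mz.det : ℤ) : ℝ) := by
    have h2 := (RingHom.map_det (Int.castRingHom ℝ) Mz).symm
    simp only [RingHom.mapMatrix_apply] at h2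
    have h3 : M = Mz.map (Int.castRingHom ℝ) := rfl
    rw [h3, h2]
    rfl
  have hMdet_ne : M.det ≠ 0 := by
    rw [hMdet]; exact_mod_cast fun h => hdetz (by exact_mod_cast h)
  set b : Fin d → ℝ := fun k => ∑ i, x i * (Δ k i : ℝ) with hb
  have hMx : M.mulVec x = b := by
    funext k
    simp only [Matrix.mulVec, dotProduct, hb, hM, Matrix.of_apply]
    exact Finset.sum_congr rfl fun i _ => mul_comm _ _
  have hcr : Matrix.cramer M b = M.det • x := by
    have hinj : Function.Injective M.mulVec :=
      Matrix.mulVec_injective_iff_isUnit.mpr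
        ((Matrix.isUnit_iff_isUnit_det _).mpr (isUnit_iff_ne_zero.mpr hMdet_ne))
    apply hinj
    show M.mulVec _ = M.mulVec _
    rw [Matrix.mulVec_cramer, Matrix.mulVec_smul, hMx]
  -- per-coordinate bound
  have hxi : ∀ i, |x i| ≤ (Nat.factorial d : ℝ) * A₁ ^ (d - 1) * A₂ := by
    intro i
    have h1 : |M.det| * |x i| = |(Matrix.updateCol M i b).det| := by
      rw [← abs_mul, ← Matrix.cramer_apply, hcr]
      simp [smul_eq_mul]
    have h2 : |(Matrix.updateCol M i b).det| ≤ (Nat.factorial d : ℝ) * A₁ ^ (d - 1) * A₂ := by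
      apply det_bound_aux d _ i A₁ A₂ hA₁.le hA₂.le
      · intro k; rw [Matrix.updateCol_self]; exact hx k
      · intro k l hl; rw [Matrix.updateCol_ne hl]; exact hentry k l
    calc |x i| = 1 * |x i| := (one_mul _).symm
      _ ≤ |M.det| * |x i| := by
          apply mul_le_mul_of_nonneg_right _ (abs_nonneg _)
          rw [hMdet]; exact hdet1
      _ ≤ _ := h1 ▸ h2
  -- conclude
  set K : ℝ := (Nat.factorial d : ℝ) * A₁ ^ (d - 1) * A₂ with hK
  have hK0 : 0 ≤ K := by positivity
  have hsum : ∑ i, (x i) ^ 2 ≤ (d : ℝ) * K ^ 2 := by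
    calc ∑ i, (x i) ^ 2 ≤ ∑ _i : Fin d, K ^ 2 := by
          apply Finset.sum_le_sum
          intro i _
          rw [← sq_abs]
          exact pow_le_pow_left₀ (abs_nonneg _) (hxi i) 2
      _ = (d : ℝ) * K ^ 2 := by simp [Finset.sum_const, Fintype.card_fin]
  calc Real.sqrt (∑ i, (x i) ^ 2) ≤ Real.sqrt ((d : ℝ) * K ^ 2) := Real.sqrt_le_sqrt hsum
    _ = Real.sqrt d * K := by
        rw [Real.sqrt_mul (Nat.cast_nonneg d), Real.sqrt_sq hK0]
    _ = Real.sqrt d * Nat.factorial d * A₁ ^ (d - 1) * A₂ := by rw [hK]; ring
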